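/- Let Φ = {f_i(x) = A_i x + t_i}_{i∈𝒜} be an affine IFS on ℝ² with attractor X, 1 < s ≤ 2, and define h(ī) = ∫ H^{s−1}_∞(X ∩ proj_{V(ī)}^{-1}(t)) dλ(t) for the Furstenberg direction V(ī). Then h(ī) ≤ (𝓛h)(ī) = Σ_{k∈𝒜} ‖A_k*|_{V(ī)}‖ · ‖A_k|_{V(kī)^⊥}‖^{s−1} · h(kī) for all ī ∈ Σ. -/

import Mathlib

open MeasureTheory Set ContinuousLinearMap
open scoped ENNReal RealInnerProductSpace

noncomputable section

abbrev E2 := EuclideanSpace ℝ (Fin 2)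

/-- The `s`-dimensional Hausdorff content. -/
noncomputable def hausdorffContent (s : ℝ) (A : Set E2) : ℝ≥0∞ :=
  ⨅ (U : ℕ → Set E2) (_ : A ⊆ ⋃ n, U n), ∑' n, EMetric.diam (U n) ^ s

/-- Rotation of a planar vector by 90 degrees; for a unit vector `v` it spans the
orthogonal complement of the line spanned by `v`. -/
noncomputable def perp2 (v : E2) : E2 :=
  (WithLp.equiv 2 (Fin 2 → ℝ)).symm ![-(v 1), v 0]

/-- Prepending a symbol: `consW k ī = kī`. -/
def consW {ι : Type} (k : ι) (ib : ℕ → ι) : ℕ → ι := fun n => Nat.casesOn n k ib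

/-- Product of matrices along a finite word. -/
noncomputable def wordProd {ι : Type} (A : ι → E2 ≃L[ℝ] E2) (w : List ι) : E2 ≃L[ℝ] E2 :=
  (w.map A).prod

namespace Stmt10Aux

open scoped NNReal

lemma hc_zero_empty {sp : ℝ} (hsp : 0 < sp) :
    EMetric.diam (∅ : Set E2) ^ sp = 0 := by
  simp [ENNReal.zero_rpow_of_pos hsp]
  exact Or.inl ⟨Metric.ediam_empty, hsp⟩

lemma hc_eq {sp : ℝ} (hsp : 0 < sp) (B : Set E2) :
    hausdorffContent sp B =
      OuterMeasure.ofFunction (fun U : Set E2 => EMetric.diam U ^ sp) (hc_zero_empty hsp) B := rfl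

lemma hc_mono (sp : ℝ) {B C : Set E2} (h : B ⊆ C) :
    hausdorffContent sp B ≤ hausdorffContent sp C :=
  le_iInf₂ fun U hU => iInf₂_le U (h.trans hU)

lemma hc_iUnion_le {κ : Type} [Fintype κ] {sp : ℝ} (hsp : 0 < sp) (S : κ → Set E2) :
    hausdorffContent sp (⋃ k, S k) ≤ ∑ k, hausdorffContent sp (S k) := by
  simp only [hc_eq hsp]
  exact measure_iUnion_fintype_le _ S

lemma hc_image_le {sp : ℝ} (hsp0 : 0 < sp) {S : Set E2} {f : E2 → E2} {L : ℝ≥0∞}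
    (hL0 : L ≠ 0) (hLt : L ≠ ∞)
    (hf : ∀ x ∈ S, ∀ y ∈ S, edist (f x) (f y) ≤ L * edist x y) :
    hausdorffContent sp (f '' S) ≤ L ^ sp * hausdorffContent sp S := by
  have hpow0 : L ^ sp ≠ 0 := (ENNReal.rpow_pos (pos_iff_ne_zero.2 hL0) hLt).ne'
  have hpowt : L ^ sp ≠ ∞ := ENNReal.rpow_ne_top_of_nonneg hsp0.le hLt
  simp only [hausdorffContent]
  rw [ENNReal.mul_iInf_of_ne hpow0 hpowt]
  refine le_iInf fun U => ?_
  rw [ENNReal.mul_iInf_of_ne hpow0 hpowt]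
  refine le_iInf fun hU => ?_
  refine le_trans (iInf₂_le (fun n => f '' (U n ∩ S)) ?_) ?_
  · rintro _ ⟨y, hyS, rfl⟩
    obtain ⟨n, hn⟩ := mem_iUnion.1 (hU hyS)
    exact mem_iUnion.2 ⟨n, mem_image_of_mem f ⟨hn, hyS⟩⟩
  · rw [← ENNReal.tsum_mul_left]
    refine ENNReal.tsum_le_tsum fun n => ?_
    rw [← ENNReal.mul_rpow_of_nonneg _ _ hsp0.le]
    refine ENNReal.rpow_le_rpow ?_ hsp0.le
    refine EMetric.diam_le fun x hx y hy => ?_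
    obtain ⟨x', hx', rfl⟩ := hx
    obtain ⟨y', hy', rfl⟩ := hy
    calc edist (f x') (f y') ≤ L * edist x' y' := hf x' hx'.2 y' hy'.2
      _ ≤ L * EMetric.diam (U n) :=
        by gcongr; exact EMetric.edist_le_diam_of_mem hx'.1 hy'.1

lemma perp2_apply0 (v : E2) : perp2 v 0 = -(v 1) := rfl
lemma perp2_apply1 (v : E2) : perp2 v 1 = v 0 := rfl

lemma inner_E2 (x y : E2) : ⟪x, y⟫ = x 0 * y 0 + x 1 * y 1 := by
  simp [PiLp.inner_apply, Fin.sum_univ_two, RCLike.inner_apply, conj_trivial]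
  ring

lemma norm_perp2 (v : E2) : ‖perp2 v‖ = ‖v‖ := by
  rw [EuclideanSpace.norm_eq, EuclideanSpace.norm_eq]
  simp [Fin.sum_univ_two, perp2_apply0, perp2_apply1, add_comm]

lemma eq_smul_perp2 {w : E2} (hw : ‖w‖ = 1) {u : E2} (hu : ⟪w, u⟫ = (0:ℝ)) :
    u = (-(w 1) * u 0 + w 0 * u 1) • perp2 w := by
  have hw2 : w 0 * w 0 + w 1 * w 1 = 1 := by
    have h := real_inner_self_eq_norm_mul_norm w
    rw [hw, one_mul, inner_E2] at h
    linarith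
  have h0 : w 0 * u 0 + w 1 * u 1 = 0 := by rw [← inner_E2]; exact hu
  ext i
  fin_cases i
  · show u 0 = (-(w 1) * u 0 + w 0 * u 1) * perp2 w 0
    rw [perp2_apply0]
    linear_combination w 0 * h0 - u 0 * hw2
  · show u 1 = (-(w 1) * u 0 + w 0 * u 1) * perp2 w 1
    rw [perp2_apply1]
    linear_combination w 1 * h0 - u 1 * hw2

lemma measurable_slice {sp : ℝ} (hsp0 : 0 < sp) (hsp1 : sp ≤ 1) {K : Set E2} (hK : IsCompact K)
    (w : E2) : Measurable fun t : ℝ => hausdorffContent sp (K ∩ {x | ⟪w, x⟫ = t}) := by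
  have hopen : ∀ a : ℝ≥0∞, IsOpen {t : ℝ | hausdorffContent sp (K ∩ {x | ⟪w, x⟫ = t}) < a} := by
    intro a
    rw [isOpen_iff_mem_nhds]
    intro t ht
    simp only [mem_setOf_eq, hausdorffContent] at ht
    obtain ⟨U, hU⟩ := iInf_lt_iff.1 ht
    obtain ⟨hUc, hsum⟩ := iInf_lt_iff.1 hU
    obtain ⟨r, hr0, hra⟩ := ENNReal.lt_iff_exists_add_pos_lt.1 hsum
    set q : ℕ → ℝ≥0 := fun n => r / 2 ^ (n + 1) with hqdef
    have hq0 : ∀ n, 0 < q n := fun n => by positivity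
    set ε : ℕ → ℝ≥0 := fun n => q n ^ (1 / sp : ℝ) / 2 with hεdef
    have hε0 : ∀ n, 0 < ε n := fun n => div_pos (NNReal.rpow_pos (hq0 n)) two_pos
    set Vn : ℕ → Set E2 := fun n => Metric.thickening (ε n) (U n) with hVdef
    have hVopen : IsOpen (⋃ n, Vn n) := isOpen_iUnion fun n => Metric.isOpen_thickening
    have hdiam : ∀ n, EMetric.diam (Vn n) ^ sp ≤ EMetric.diam (U n) ^ sp + (q n : ℝ≥0∞) := by
      intro n
      have h1 : EMetric.diam (Vn n) ≤ EMetric.diam (U n) + 2 * (ε n : ℝ≥0∞) :=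
        Metric.ediam_thickening_le (ε n)
      calc EMetric.diam (Vn n) ^ sp
          ≤ (EMetric.diam (U n) + 2 * (ε n : ℝ≥0∞)) ^ sp := ENNReal.rpow_le_rpow h1 hsp0.le
        _ ≤ EMetric.diam (U n) ^ sp + (2 * (ε n : ℝ≥0∞)) ^ sp :=
            ENNReal.rpow_add_le_add_rpow _ _ hsp0.le hsp1
        _ = EMetric.diam (U n) ^ sp + (q n : ℝ≥0∞) := by
            congr 1
            have h2 : (2 : ℝ≥0∞) * (ε n : ℝ≥0∞) = ((q n ^ (1/sp : ℝ) : ℝ≥0) : ℝ≥0∞) := by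
              rw [← ENNReal.coe_ofNat, ← ENNReal.coe_mul]
              congr 1
              rw [hεdef]
              rw [mul_comm, div_mul_cancel₀ _ (two_ne_zero)]
            rw [h2, ← ENNReal.coe_rpow_of_nonneg _ hsp0.le]
            congr 1
            rw [← NNReal.rpow_mul, one_div, inv_mul_cancel₀ hsp0.ne', NNReal.rpow_one]
    have hqsum : ∑' n, (q n : ℝ≥0∞) = (r : ℝ≥0∞) := by
      have hqe : ∀ n, ((q n : ℝ≥0) : ℝ≥0∞) = (r : ℝ≥0∞) * 2⁻¹ * (2⁻¹) ^ n := by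
        intro n
        rw [hqdef]
        rw [ENNReal.coe_div (by positivity), ENNReal.coe_pow, ENNReal.coe_ofNat]
        rw [div_eq_mul_inv, pow_succ,
          ENNReal.mul_inv (Or.inl (pow_ne_zero n (by norm_num))) (Or.inr (by norm_num)),
          ENNReal.inv_pow]
        ring
      calc ∑' n, ((q n : ℝ≥0) : ℝ≥0∞) = ∑' n, (r : ℝ≥0∞) * 2⁻¹ * (2⁻¹) ^ n := by
            simp only [hqe]
        _ = (r : ℝ≥0∞) * 2⁻¹ * ∑' n, (2⁻¹ : ℝ≥0∞) ^ n := ENNReal.tsum_mul_left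
        _ = (r : ℝ≥0∞) * 2⁻¹ * (1 - 2⁻¹)⁻¹ := by rw [ENNReal.tsum_geometric]
        _ = (r : ℝ≥0∞) := by
            rw [ENNReal.one_sub_inv_two, inv_inv, mul_assoc,
              ENNReal.inv_mul_cancel (by norm_num) (by norm_num), mul_one]
    have key : ∀ t' : ℝ, K ∩ {x | ⟪w, x⟫ = t'} ⊆ ⋃ n, Vn n →
        hausdorffContent sp (K ∩ {x | ⟪w, x⟫ = t'}) < a := by
      intro t' hsub
      calc hausdorffContent sp (K ∩ {x | ⟪w, x⟫ = t'})
          ≤ ∑' n, EMetric.diam (Vn n) ^ sp := iInf₂_le Vn hsub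
        _ ≤ ∑' n, (EMetric.diam (U n) ^ sp + (q n : ℝ≥0∞)) := ENNReal.tsum_le_tsum hdiam
        _ = (∑' n, EMetric.diam (U n) ^ sp) + ∑' n, (q n : ℝ≥0∞) := ENNReal.tsum_add
        _ = (∑' n, EMetric.diam (U n) ^ sp) + r := by rw [hqsum]
        _ < a := hra
    have hcover : K ∩ {x | ⟪w, x⟫ = t} ⊆ ⋃ n, Vn n :=
      hUc.trans (iUnion_mono fun n => Metric.self_subset_thickening (by exact_mod_cast hε0 n) _)
    by_cases hne : (K \ ⋃ n, Vn n).Nonempty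
    · have hCc : IsCompact (K \ ⋃ n, Vn n) := hK.diff hVopen
      have hcont : ContinuousOn (fun x : E2 => |⟪w, x⟫ - t|) (K \ ⋃ n, Vn n) :=
        (((continuous_const.inner continuous_id).sub continuous_const).abs).continuousOn
      obtain ⟨x0, hx0, hmin⟩ := hCc.exists_isMinOn hne hcont
      have hm0 : 0 < |⟪w, x0⟫ - t| := by
        rw [abs_pos, sub_ne_zero]
        intro heq
        exact hx0.2 (hcover ⟨hx0.1, heq⟩)
      refine Filter.mem_of_superset (Metric.ball_mem_nhds t hm0) ?_
      intro t' ht'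
      rw [Metric.mem_ball, Real.dist_eq] at ht'
      simp only [mem_setOf_eq]
      refine key t' ?_
      intro x hx
      by_contra hxV
      have hle := hmin ⟨hx.1, hxV⟩
      simp only [mem_setOf_eq] at hle
      have hx2 : ⟪w, x⟫ = t' := hx.2
      rw [hx2] at hle
      linarith
    · rw [not_nonempty_iff_eq_empty, diff_eq_empty] at hne
      exact Filter.mem_of_superset Filter.univ_mem fun t' _ => key t' fun x hx => hne hx.1
  exact measurable_of_Iio fun a => (hopen a).measurableSet

lemma lintegral_affine (g : ℝ → ℝ≥0∞) (hg : Measurable g) {c : ℝ} (hc : 0 < c) (b : ℝ) :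
    ∫⁻ t : ℝ, g ((t - b) / c) = ENNReal.ofReal c * ∫⁻ u : ℝ, g u := by
  have h1 : (fun t : ℝ => (t - b) / c) = (fun u : ℝ => c⁻¹ * u) ∘ (fun t : ℝ => t + (-b)) := by
    funext t
    simp [div_eq_inv_mul, sub_eq_add_neg]
  have hm1 : Measurable fun u : ℝ => c⁻¹ * u := measurable_const_mul _
  have hm2 : Measurable fun t : ℝ => t + (-b) := measurable_add_const _
  calc ∫⁻ t : ℝ, g ((t - b) / c) ∂volume
      = ∫⁻ t : ℝ, g t ∂(volume.map fun t : ℝ => (t - b) / c) := by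
        rw [lintegral_map hg (by rw [h1]; exact hm1.comp hm2)]
    _ = ENNReal.ofReal c * ∫⁻ u : ℝ, g u := by
        rw [h1, ← Measure.map_map hm1 hm2]
        rw [map_add_right_eq_self volume (-b), Real.map_volume_mul_left (inv_ne_zero hc.ne')]
        rw [lintegral_smul_measure]
        congr 1
        rw [inv_inv, abs_of_pos hc]

end Stmt10Aux

open Stmt10Aux in
/-- Let `Φ = {fᵢ(x) = Aᵢx + tᵢ}` be a dominated affine IFS on `ℝ²` with attractor `X`,
`1 < s ≤ 2`, and `V : Σ → ℝP¹` the Furstenberg-direction map (represented by unit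
vectors, equivariant: `A_{i₁}* V(σī) ∥ V(ī)`).  With
`h(ī) = ∫ H^{s−1}_∞ (X ∩ proj_{V(ī)}⁻¹(t)) dλ(t)` one has
`h(ī) ≤ (𝓛h)(ī) = ∑ₖ ‖A_k*|_{V(ī)}‖ ‖A_k|_{V(kī)^⊥}‖^{s−1} h(kī)`. -/
theorem stmt10 {ι : Type} [Fintype ι] [Nonempty ι]
    (A : ι → E2 ≃L[ℝ] E2) (tr : ι → E2)
    (hcontr : ∀ i, ‖(A i : E2 →L[ℝ] E2)‖ < 1)
    (hdom : ∃ C : ℝ, 0 < C ∧ ∃ τ ∈ Set.Ioo (0 : ℝ) 1, ∀ w : List ι, w ≠ [] →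
      ‖((wordProd A w).symm : E2 →L[ℝ] E2)‖⁻¹ ≤
        C * τ ^ w.length * ‖(wordProd A w : E2 →L[ℝ] E2)‖)
    (X : Set E2) (hXc : IsCompact X) (hXne : X.Nonempty)
    (hXinv : X = ⋃ i : ι, (fun x => (A i : E2 →L[ℝ] E2) x + tr i) '' X)
    (s : ℝ) (hs1 : 1 < s) (hs2 : s ≤ 2)
    (V : (ℕ → ι) → E2) (hVunit : ∀ ib, ‖V ib‖ = 1)
    (hVequiv : ∀ ib : ℕ → ι, ∃ c : ℝ, 0 < c ∧
      adjoint (A (ib 0) : E2 →L[ℝ] E2) (V fun n => ib (n + 1)) = c • V ib) :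
    ∀ ib : ℕ → ι,
      (∫⁻ t : ℝ, hausdorffContent (s - 1) (X ∩ {x | ⟪V ib, x⟫ = t}) ∂volume) ≤
        ∑ k : ι,
          ENNReal.ofReal ‖adjoint (A k : E2 →L[ℝ] E2) (V ib)‖ *
            ENNReal.ofReal ‖(A k : E2 →L[ℝ] E2) (perp2 (V (consW k ib)))‖ ^ (s - 1) *
            ∫⁻ t : ℝ, hausdorffContent (s - 1) (X ∩ {x | ⟪V (consW k ib), x⟫ = t}) ∂volume := by
  intro ib
  have hsp0 : 0 < s - 1 := by linarith
  have hsp1 : s - 1 ≤ 1 := by linarith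
  have hequiv : ∀ k : ι, ∃ c : ℝ, 0 < c ∧
      adjoint (A k : E2 →L[ℝ] E2) (V ib) = c • V (consW k ib) := fun k => hVequiv (consW k ib)
  choose c hc0 hck using hequiv
  have hgmeas : ∀ k : ι,
      Measurable fun u : ℝ => hausdorffContent (s - 1) (X ∩ {y | ⟪V (consW k ib), y⟫ = u}) :=
    fun k => measurable_slice hsp0 hsp1 hXc _
  have hL0 : ∀ k : ι, 0 < ‖(A k : E2 →L[ℝ] E2) (perp2 (V (consW k ib)))‖ := by
    intro k
    rw [norm_pos_iff]
    intro h
    have hz : perp2 (V (consW k ib)) = 0 := by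
      have := (A k).injective (by simpa using h)
      simpa using this
    have hnorm : ‖perp2 (V (consW k ib))‖ = 1 := by rw [norm_perp2, hVunit]
    rw [hz, norm_zero] at hnorm
    norm_num at hnorm
  have hnormadj : ∀ k : ι, ‖adjoint (A k : E2 →L[ℝ] E2) (V ib)‖ = c k := by
    intro k
    rw [hck k, norm_smul, hVunit, mul_one, Real.norm_eq_abs, abs_of_pos (hc0 k)]
  -- slice image identity
  have himg : ∀ (k : ι) (t : ℝ),
      ((fun x => (A k : E2 →L[ℝ] E2) x + tr k) '' X) ∩ {x | ⟪V ib, x⟫ = t}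
        = (fun x => (A k : E2 →L[ℝ] E2) x + tr k) ''
            (X ∩ {y | ⟪V (consW k ib), y⟫ = (t - ⟪V ib, tr k⟫) / c k}) := by
    intro k t
    ext x
    constructor
    · rintro ⟨⟨y, hyX, rfl⟩, hxt⟩
      refine ⟨y, ⟨hyX, ?_⟩, rfl⟩
      have hxt' : ⟪V ib, (A k : E2 →L[ℝ] E2) y + tr k⟫ = t := hxt
      rw [inner_add_right, ← ContinuousLinearMap.adjoint_inner_left, hck k,
        real_inner_smul_left] at hxt'
      show ⟪V (consW k ib), y⟫ = (t - ⟪V ib, tr k⟫) / c k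
      rw [eq_div_iff (hc0 k).ne']
      linarith
    · rintro ⟨y, ⟨hyX, hy⟩, rfl⟩
      refine ⟨⟨y, hyX, rfl⟩, ?_⟩
      show ⟪V ib, (A k : E2 →L[ℝ] E2) y + tr k⟫ = t
      rw [inner_add_right, ← ContinuousLinearMap.adjoint_inner_left, hck k,
        real_inner_smul_left]
      have hy' : ⟪V (consW k ib), y⟫ = (t - ⟪V ib, tr k⟫) / c k := hy
      rw [hy', mul_comm, div_mul_cancel₀ _ (hc0 k).ne']
      ring
  -- Lipschitz property on slices
  have hlip : ∀ (k : ι) (u : ℝ), ∀ x ∈ X ∩ {y : E2 | ⟪V (consW k ib), y⟫ = u},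
      ∀ y ∈ X ∩ {y : E2 | ⟪V (consW k ib), y⟫ = u},
      edist ((A k : E2 →L[ℝ] E2) x + tr k) ((A k : E2 →L[ℝ] E2) y + tr k)
        ≤ ENNReal.ofReal ‖(A k : E2 →L[ℝ] E2) (perp2 (V (consW k ib)))‖ * edist x y := by
    intro k u x hx y hy
    have hwu : ‖V (consW k ib)‖ = 1 := hVunit _
    have hinner0 : ⟪V (consW k ib), x - y⟫ = (0:ℝ) := by
      rw [inner_sub_right]
      have h1 : ⟪V (consW k ib), x⟫ = u := hx.2
      have h2 : ⟪V (consW k ib), y⟫ = u := hy.2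
      rw [h1, h2, sub_self]
    have hdecomp := eq_smul_perp2 hwu hinner0
    have hdist : dist ((A k : E2 →L[ℝ] E2) x + tr k) ((A k : E2 →L[ℝ] E2) y + tr k)
        = ‖(A k : E2 →L[ℝ] E2) (perp2 (V (consW k ib)))‖ * dist x y := by
      rw [dist_eq_norm, dist_eq_norm]
      have hsub : ((A k : E2 →L[ℝ] E2) x + tr k) - ((A k : E2 →L[ℝ] E2) y + tr k)
          = (A k : E2 →L[ℝ] E2) (x - y) := by rw [map_sub]; abel
      rw [hsub, hdecomp, ContinuousLinearMap.map_smul, norm_smul, norm_smul, norm_perp2, hwu, mul_one]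
      ring
    rw [edist_dist, edist_dist, hdist, ENNReal.ofReal_mul (hL0 k).le]
  -- pointwise content bound
  have hpoint : ∀ t : ℝ, hausdorffContent (s - 1) (X ∩ {x | ⟪V ib, x⟫ = t})
      ≤ ∑ k : ι, ENNReal.ofReal ‖(A k : E2 →L[ℝ] E2) (perp2 (V (consW k ib)))‖ ^ (s - 1) *
          hausdorffContent (s - 1)
            (X ∩ {y | ⟪V (consW k ib), y⟫ = (t - ⟪V ib, tr k⟫) / c k}) := by
    intro t
    have h1 : X ∩ {x | ⟪V ib, x⟫ = t} ⊆
        ⋃ k : ι, (((fun x => (A k : E2 →L[ℝ] E2) x + tr k) '' X) ∩ {x | ⟪V ib, x⟫ = t}) := by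
      rintro x ⟨hxX, hxt⟩
      rw [hXinv] at hxX
      obtain ⟨k, hk⟩ := mem_iUnion.1 hxX
      exact mem_iUnion.2 ⟨k, hk, hxt⟩
    calc hausdorffContent (s - 1) (X ∩ {x | ⟪V ib, x⟫ = t})
        ≤ hausdorffContent (s - 1)
            (⋃ k : ι, (((fun x => (A k : E2 →L[ℝ] E2) x + tr k) '' X) ∩ {x | ⟪V ib, x⟫ = t})) :=
          hc_mono _ h1
      _ ≤ ∑ k : ι, hausdorffContent (s - 1)
            (((fun x => (A k : E2 →L[ℝ] E2) x + tr k) '' X) ∩ {x | ⟪V ib, x⟫ = t}) :=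
          hc_iUnion_le hsp0 _
      _ ≤ _ := by
          refine Finset.sum_le_sum fun k _ => ?_
          rw [himg k t]
          exact hc_image_le hsp0 (ENNReal.ofReal_pos.2 (hL0 k)).ne'
            ENNReal.ofReal_ne_top (hlip k _)
  -- integrate
  calc ∫⁻ t : ℝ, hausdorffContent (s - 1) (X ∩ {x | ⟪V ib, x⟫ = t})
      ≤ ∫⁻ t : ℝ, ∑ k : ι,
          ENNReal.ofReal ‖(A k : E2 →L[ℝ] E2) (perp2 (V (consW k ib)))‖ ^ (s - 1) *
            hausdorffContent (s - 1)
              (X ∩ {y | ⟪V (consW k ib), y⟫ = (t - ⟪V ib, tr k⟫) / c k}) :=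
        lintegral_mono hpoint
    _ = ∑ k : ι, ∫⁻ t : ℝ,
          ENNReal.ofReal ‖(A k : E2 →L[ℝ] E2) (perp2 (V (consW k ib)))‖ ^ (s - 1) *
            hausdorffContent (s - 1)
              (X ∩ {y | ⟪V (consW k ib), y⟫ = (t - ⟪V ib, tr k⟫) / c k}) := by
        refine lintegral_finset_sum _ fun k _ => ?_
        exact (((hgmeas k).comp ((measurable_id.sub_const _).div_const _)).const_mul _)
    _ = ∑ k : ι,
          ENNReal.ofReal ‖adjoint (A k : E2 →L[ℝ] E2) (V ib)‖ *
            ENNReal.ofReal ‖(A k : E2 →L[ℝ] E2) (perp2 (V (consW k ib)))‖ ^ (s - 1) *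
            ∫⁻ t : ℝ, hausdorffContent (s - 1) (X ∩ {x | ⟪V (consW k ib), x⟫ = t}) ∂volume := by
        refine Finset.sum_congr rfl fun k _ => ?_
        have hm : Measurable fun t : ℝ => hausdorffContent (s - 1)
            (X ∩ {y | ⟪V (consW k ib), y⟫ = (t - ⟪V ib, tr k⟫) / c k}) :=
          (hgmeas k).comp ((measurable_id.sub_const _).div_const _)
        rw [lintegral_const_mul _ hm]
        rw [lintegral_affine
          (fun u : ℝ => hausdorffContent (s - 1) (X ∩ {y | ⟪V (consW k ib), y⟫ = u}))
          (hgmeas k) (hc0 k) (⟪V ib, tr k⟫)]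
        rw [hnormadj k]
        ring

end
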